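/- Let g and g̃ be probability densities on an S_n-symmetric measurable Ω, with the symmetrization h̃ of g̃ non-zero a.e. If φ : Ω → [0,1] satisfies (1/n!) Σ_{π∈S_n} (g̃(πx)/h̃(x)) φ(πx) = α a.e., then |∫_Ω g φ dμ − α| ≤ ∫_Ω |g − g̃| dμ; i.e., the bias of the test defined from the approximate density is bounded by the L¹-distance between g and g̃. -/

import Mathlib

open MeasureTheory

/-- The action of a permutation `π` on vectors: `(π • x) k = x (π k)`. -/
def permAct {n : ℕ} (π : Equiv.Perm (Fin n)) (x : Fin n → ℝ) : Fin n → ℝ := x ∘ π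

/-- The symmetrization of `g`. -/
noncomputable def symmetrize {n : ℕ} (g : (Fin n → ℝ) → ℝ) (x : Fin n → ℝ) : ℝ :=
  (1 / (n.factorial : ℝ)) * ∑ π : Equiv.Perm (Fin n), g (permAct π x)

lemma permAct_eq_equiv {n : ℕ} (π : Equiv.Perm (Fin n)) :
    permAct π = ⇑(MeasurableEquiv.piCongrLeft (fun _ : Fin n => ℝ) π.symm) := by
  funext x
  funext j
  have h := MeasurableEquiv.piCongrLeft_apply_apply (β := fun _ : Fin n => ℝ) π.symm x (π j)
  simpa [permAct] using h.symm

lemma permAct_measurePreserving {n : ℕ} (π : Equiv.Perm (Fin n)) :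
    MeasurePreserving (permAct π) (volume : Measure (Fin n → ℝ)) volume := by
  rw [permAct_eq_equiv]
  exact MeasureTheory.volume_measurePreserving_piCongrLeft (fun _ : Fin n => ℝ) π.symm

lemma permAct_embedding {n : ℕ} (π : Equiv.Perm (Fin n)) :
    MeasurableEmbedding (permAct π) := by
  rw [permAct_eq_equiv]
  exact (MeasurableEquiv.piCongrLeft (fun _ : Fin n => ℝ) π.symm).measurableEmbedding

set_option maxHeartbeats 1000000 in
/-- The bias of a generalized permutation test constructed from an approximate density `g̃`
is bounded by the `L¹`-distance between `g` and `g̃`. -/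
theorem stmt_11 {n : ℕ} (Ω : Set (Fin n → ℝ)) (hΩmeas : MeasurableSet Ω)
    (hΩsym : ∀ (π : Equiv.Perm (Fin n)) (x : Fin n → ℝ), x ∈ Ω → permAct π x ∈ Ω)
    (g gt : (Fin n → ℝ) → ℝ)
    (hgmeas : Measurable g) (hgpos : ∀ x, 0 ≤ g x)
    (hgint : IntegrableOn g Ω volume) (hgdens : ∫ x in Ω, g x = 1)
    (hgtmeas : Measurable gt) (hgtpos : ∀ x, 0 ≤ gt x)
    (hgtint : IntegrableOn gt Ω volume) (hgtdens : ∫ x in Ω, gt x = 1)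
    (hne : ∀ᵐ x ∂(volume.restrict Ω), symmetrize gt x ≠ 0)
    (α : ℝ) (φ : (Fin n → ℝ) → ℝ) (hφmeas : Measurable φ)
    (hφ01 : ∀ x, φ x ∈ Set.Icc (0 : ℝ) 1)
    (hgperm : ∀ᵐ x ∂(volume.restrict Ω),
      (1 / (n.factorial : ℝ)) *
        ∑ π : Equiv.Perm (Fin n), (gt (permAct π x) / symmetrize gt x) * φ (permAct π x) = α) :
    |(∫ x in Ω, g x * φ x) - α| ≤ ∫ x in Ω, |g x - gt x| := by
  -- preimage of Ω under permAct π is Ω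
  have hpre : ∀ π : Equiv.Perm (Fin n), (permAct π) ⁻¹' Ω = Ω := by
    intro π
    ext x
    constructor
    · intro hx
      have := hΩsym π⁻¹ _ hx
      have hxx : permAct π⁻¹ (permAct π x) = x := by
        funext j; simp [permAct]
      rwa [hxx] at this
    · intro hx
      exact hΩsym π x hx
  have hmp : ∀ π : Equiv.Perm (Fin n),
      MeasurePreserving (permAct π) (volume.restrict Ω) (volume.restrict Ω) := by
    intro π
    have := (permAct_measurePreserving π).restrict_preimage (s := Ω) hΩmeas
    rwa [hpre π] at this
  have hcomp : ∀ (π : Equiv.Perm (Fin n)) (f : (Fin n → ℝ) → ℝ),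
      ∫ x in Ω, f (permAct π x) = ∫ x in Ω, f x := by
    intro π f
    exact (hmp π).integral_comp (permAct_embedding π) f
  -- integrability facts
  have hφbd : ∀ x, ‖φ x‖ ≤ 1 := by
    intro x
    rcases hφ01 x with ⟨h0, h1⟩
    rw [Real.norm_eq_abs, abs_of_nonneg h0]; exact h1
  have hgtφint : IntegrableOn (fun x => gt x * φ x) Ω volume := by
    have := hgtint.bdd_mul (f := φ) (c := 1) (hφmeas.aestronglyMeasurable) (Filter.Eventually.of_forall hφbd)
    simpa [mul_comm, IntegrableOn] using this
  have hgφint : IntegrableOn (fun x => g x * φ x) Ω volume := by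
    have := hgint.bdd_mul (f := φ) (c := 1) (hφmeas.aestronglyMeasurable) (Filter.Eventually.of_forall hφbd)
    simpa [mul_comm, IntegrableOn] using this
  have hcompint : ∀ (π : Equiv.Perm (Fin n)) (f : (Fin n → ℝ) → ℝ),
      IntegrableOn f Ω volume → IntegrableOn (fun x => f (permAct π x)) Ω volume := by
    intro π f hf
    exact ((hmp π).integrable_comp_emb (permAct_embedding π)).mpr hf
  -- key: ∫ gt φ = α
  have hkey : ∫ x in Ω, gt x * φ x = α := by
    have h1 : ∫ x in Ω, gt x * φ x
        = (1 / (n.factorial : ℝ)) * ∑ π : Equiv.Perm (Fin n),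
            ∫ x in Ω, gt (permAct π x) * φ (permAct π x) := by
      have : ∀ π : Equiv.Perm (Fin n),
          ∫ x in Ω, gt (permAct π x) * φ (permAct π x) = ∫ x in Ω, gt x * φ x := by
        intro π
        exact hcomp π (fun x => gt x * φ x)
      simp only [this, Finset.sum_const, Finset.card_univ, Fintype.card_perm, Fintype.card_fin, nsmul_eq_mul]
      rw [← mul_assoc, one_div, inv_mul_cancel₀, one_mul]
      exact_mod_cast Nat.factorial_pos n |>.ne'
    have h2 : (1 / (n.factorial : ℝ)) * ∑ π : Equiv.Perm (Fin n),
            ∫ x in Ω, gt (permAct π x) * φ (permAct π x)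
        = ∫ x in Ω, (1 / (n.factorial : ℝ)) * ∑ π : Equiv.Perm (Fin n),
            gt (permAct π x) * φ (permAct π x) := by
      rw [← integral_finset_sum, ← integral_const_mul]
      intro π _
      exact hcompint π _ hgtφint
    have h3 : ∀ᵐ x ∂(volume.restrict Ω),
        (1 / (n.factorial : ℝ)) * ∑ π : Equiv.Perm (Fin n),
            gt (permAct π x) * φ (permAct π x) = symmetrize gt x * α := by
      filter_upwards [hne, hgperm] with x hx hα
      rw [← hα]
      have hsum : ∑ π : Equiv.Perm (Fin n), gt (permAct π x) * φ (permAct π x)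
          = ∑ π : Equiv.Perm (Fin n),
              (gt (permAct π x) / symmetrize gt x * φ (permAct π x)) * symmetrize gt x :=
        Finset.sum_congr rfl (fun π _ => by field_simp)
      rw [hsum, ← Finset.sum_mul]
      ring
    have h4 : ∫ x in Ω, symmetrize gt x * α = α := by
      have hsint : IntegrableOn (fun x => symmetrize gt x) Ω volume := by
        unfold symmetrize
        apply Integrable.const_mul
        apply integrable_finset_sum
        intro π _
        exact hcompint π _ hgtint
      have : ∫ x in Ω, symmetrize gt x = 1 := by
        unfold symmetrize
        rw [integral_const_mul, integral_finset_sum]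
        · simp only [fun π : Equiv.Perm (Fin n) => hcomp π gt, hgtdens]
          simp only [Finset.sum_const, Finset.card_univ, Fintype.card_perm, Fintype.card_fin, nsmul_eq_mul,
            mul_one]
          rw [one_div, inv_mul_cancel₀]
          exact_mod_cast Nat.factorial_pos n |>.ne'
        · intro π _
          exact hcompint π _ hgtint
      calc ∫ x in Ω, symmetrize gt x * α = (∫ x in Ω, symmetrize gt x) * α := by
            rw [← integral_mul_const]
        _ = α := by rw [this, one_mul]
    rw [h1, h2, integral_congr_ae h3, h4]
  -- conclude
  rw [← hkey]
  have hEq : (∫ x in Ω, g x * φ x) - ∫ x in Ω, gt x * φ x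
      = ∫ x in Ω, (g x - gt x) * φ x := by
    rw [← integral_sub hgφint hgtφint]
    congr 1; funext x; ring
  rw [hEq]
  have hd : IntegrableOn (fun x => (g x - gt x) * φ x) Ω volume :=
    (hgφint.sub hgtφint).congr (Filter.Eventually.of_forall (fun x => by simp only [Pi.sub_apply]; ring))
  calc |∫ x in Ω, (g x - gt x) * φ x| ≤ ∫ x in Ω, |(g x - gt x) * φ x| := by
        simpa only [Real.norm_eq_abs] using
          norm_integral_le_integral_norm (μ := volume.restrict Ω) (fun x => (g x - gt x) * φ x)
    _ ≤ ∫ x in Ω, |g x - gt x| := by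
        apply integral_mono hd.abs (hgint.sub hgtint).abs
        intro x
        simp only [abs_mul]
        calc |g x - gt x| * |φ x| ≤ |g x - gt x| * 1 := by
              apply mul_le_mul_of_nonneg_left _ (abs_nonneg _)
              simpa [Real.norm_eq_abs] using hφbd x
          _ = |g x - gt x| := mul_one _
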